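/- For every pair of nominal terms t, u and freshness environment ∇: ∇ ⊢ t ≈ u is derivable in the nominal α-equivalence theory if and only if the translated λ-terms ⟦t⟧_∇ and ⟦u⟧_∇ are α-equivalent. -/

import Mathlib

set_option linter.unreachableTactic false
set_option linter.unusedTactic false

/-! Nominal terms -/

abbrev Atom := ℕ
abbrev Var := ℕ

/-- The swapping `(a b)` acting on atoms. -/
def swapAtom (a b c : Atom) : Atom := if c = a then b else if c = b then a else c

/-- A permutation presented as a finite list of swappings. -/
abbrev Perm0 := List (Atom × Atom)

/-- Action of a list of swappings: `(a₁ b₁)…(aₙ bₙ)·c = (a₁ b₁)·(…·((aₙ bₙ)·c))`. -/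
def permAtom (π : Perm0) (c : Atom) : Atom := π.foldr (fun p d => swapAtom p.1 p.2 d) c

/-- Nominal terms. -/
inductive NTerm where
  | atom : Atom → NTerm
  | app  : ℕ → List NTerm → NTerm
  | abs  : Atom → NTerm → NTerm
  | susp : Perm0 → Var → NTerm

/-- Action of a permutation (list of swappings) on a nominal term. -/
def permTerm (π : Perm0) : NTerm → NTerm
  | .atom a => .atom (permAtom π a)
  | .app f ts => .app f (ts.attach.map (fun t => permTerm π t.1))
  | .abs a t => .abs (permAtom π a) (permTerm π t)
  | .susp π' X => .susp (π ++ π') X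
decreasing_by
  all_goals simp_wf
  all_goals first
    | (have := List.sizeOf_lt_of_mem t.2; omega)
    | omega

/-- Action of a single swapping on a nominal term. -/
def swapTerm (a b : Atom) (t : NTerm) : NTerm := permTerm [(a, b)] t

/-- Variables of a nominal term. -/
def nvars : NTerm → Finset Var
  | .atom _ => ∅
  | .app _ ts => ts.attach.foldr (fun t s => nvars t.1 ∪ s) ∅
  | .abs _ t => nvars t
  | .susp _ X => {X}
decreasing_by
  all_goals simp_wf
  all_goals first
    | (have := List.sizeOf_lt_of_mem t.2; omega)
    | omega

/-- Atoms of a nominal term (including those in suspended permutations). -/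
def natoms : NTerm → Finset Atom
  | .atom a => {a}
  | .app _ ts => ts.attach.foldr (fun t s => natoms t.1 ∪ s) ∅
  | .abs a t => insert a (natoms t)
  | .susp π _ => π.foldr (fun p s => insert p.1 (insert p.2 s)) ∅
decreasing_by
  all_goals simp_wf
  all_goals first
    | (have := List.sizeOf_lt_of_mem t.2; omega)
    | omega

/-- Size of a nominal term. -/
def sizeN : NTerm → ℕ
  | .atom _ => 1
  | .app _ ts => 1 + (ts.attach.map (fun t => sizeN t.1)).sum
  | .abs _ t => 1 + sizeN t
  | .susp π _ => 1 + π.length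
decreasing_by
  all_goals simp_wf
  all_goals first
    | (have := List.sizeOf_lt_of_mem t.2; omega)
    | omega

/-! Freshness and α-equivalence for nominal terms -/

/-- The freshness judgement `Δ ⊢ a # t`. -/
inductive Fresh (Δ : Finset (Atom × Var)) : Atom → NTerm → Prop
  | atom {a a'} : a ≠ a' → Fresh Δ a (.atom a')
  | susp {a π X} : (permAtom π.reverse a, X) ∈ Δ → Fresh Δ a (.susp π X)
  | app {a f ts} : (∀ t ∈ ts, Fresh Δ a t) → Fresh Δ a (.app f ts)
  | abs1 {a t} : Fresh Δ a (.abs a t)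
  | abs2 {a a' t} : a ≠ a' → Fresh Δ a t → Fresh Δ a (.abs a' t)

/-- The α-equivalence judgement `Δ ⊢ t ≈ u`. -/
inductive Alpha (Δ : Finset (Atom × Var)) : NTerm → NTerm → Prop
  | atom (a) : Alpha Δ (.atom a) (.atom a)
  | susp {π π' X} : (∀ a, permAtom π a ≠ permAtom π' a → (a, X) ∈ Δ) →
      Alpha Δ (.susp π X) (.susp π' X)
  | app {f ts us} : ts.length = us.length →
      (∀ p ∈ ts.zip us, Alpha Δ p.1 p.2) → Alpha Δ (.app f ts) (.app f us)
  | abs1 {a t u} : Alpha Δ t u → Alpha Δ (.abs a t) (.abs a u)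
  | abs2 {a b t u} : a ≠ b → Alpha Δ t (swapTerm a b u) → Fresh Δ a u →
      Alpha Δ (.abs a t) (.abs b u)

/-- Nominal substitutions (partial, with explicit domain). -/
abbrev NSub := Var → Option NTerm

/-- Domain of a nominal substitution. -/
def domN (σ : NSub) : Set Var := {X | (σ X).isSome}

/-- Application of a nominal substitution (capturing; suspended permutations are applied). -/
def applyN (σ : NSub) : NTerm → NTerm
  | .atom a => .atom a
  | .app f ts => .app f (ts.attach.map (fun t => applyN σ t.1))
  | .abs a t => .abs a (applyN σ t)
  | .susp π X =>
      match σ X with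
      | some u => permTerm π u
      | none => .susp π X
decreasing_by
  all_goals simp_wf
  all_goals first
    | (have := List.sizeOf_lt_of_mem t.2; omega)
    | omega

/-- The trivial suspension of a variable. -/
def nsuspV (X : Var) : NTerm := .susp [] X

/-! λ-terms -/

/-- λ-calculus variables: either (the image of) an atom or (the image of) a nominal variable. -/
abbrev LVar := Atom ⊕ Var

/-- Untyped λ-terms with constants. -/
inductive LTerm where
  | var : LVar → LTerm
  | const : ℕ → LTerm
  | lam : LVar → LTerm → LTerm
  | app : LTerm → LTerm → LTerm
deriving DecidableEq

/-- Iterated application `h(t₁,…,tₙ)`. -/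
def appList (h : LTerm) (ts : List LTerm) : LTerm := ts.foldl .app h

/-- Iterated abstraction `λx₁…λxₙ.t`. -/
def lamList (xs : List LVar) (t : LTerm) : LTerm := xs.foldr .lam t

/-- Free variables of a λ-term. -/
def FVL : LTerm → Finset LVar
  | .var v => {v}
  | .const _ => ∅
  | .lam x t => (FVL t).erase x
  | .app t u => FVL t ∪ FVL u

/-- All variables (free, bound and binding) of a λ-term. -/
def allVarsL : LTerm → Finset LVar
  | .var v => {v}
  | .const _ => ∅
  | .lam x t => insert x (allVarsL t)
  | .app t u => allVarsL t ∪ allVarsL u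

/-- Binder variables of a λ-term. -/
def bvarsL : LTerm → Finset LVar
  | .var _ => ∅
  | .const _ => ∅
  | .lam x t => insert x (bvarsL t)
  | .app t u => bvarsL t ∪ bvarsL u

/-- Size of a λ-term. -/
def sizeL : LTerm → ℕ
  | .var _ => 1
  | .const _ => 1
  | .lam _ t => 1 + sizeL t
  | .app t u => 1 + sizeL t + sizeL u

/-- The function on variable names exchanging `x` and `y`. -/
def varMap (x y : LVar) : LVar → LVar := fun z => if z = x then y else if z = y then x else z

/-- Renaming all occurrences of variables (free, bound and binding) of a λ-term. -/
def renameAll (f : LVar → LVar) : LTerm → LTerm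
  | .var v => .var (f v)
  | .const c => .const c
  | .lam x t => .lam (f x) (renameAll f t)
  | .app t u => .app (renameAll f t) (renameAll f u)

/-- The swapping `(x y)·t` on λ-terms, exchanging `x` and `y` at every occurrence. -/
def swapL (x y : LVar) (t : LTerm) : LTerm := renameAll (varMap x y) t

theorem sizeL_renameAll (f : LVar → LVar) (t : LTerm) : sizeL (renameAll f t) = sizeL t := by
  induction t <;> simp [renameAll, sizeL, *]

/-- α-equivalence of λ-terms. -/
inductive AEq : LTerm → LTerm → Prop
  | var (v) : AEq (.var v) (.var v)
  | const (c) : AEq (.const c) (.const c)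
  | app {t t' u u'} : AEq t t' → AEq u u' → AEq (.app t u) (.app t' u')
  | lam {x y t u} (z : LVar) : z ∉ allVarsL t → z ∉ allVarsL u → z ≠ x → z ≠ y →
      AEq (swapL x z t) (swapL y z u) → AEq (.lam x t) (.lam y u)

/-- Naive (possibly capturing) substitution of `u` for the free variable `x`. -/
def nsubst (x : LVar) (u : LTerm) : LTerm → LTerm
  | .var y => if y = x then u else .var y
  | .const c => .const c
  | .app t1 t2 => .app (nsubst x u t1) (nsubst x u t2)
  | .lam y t => if y = x then .lam y t else .lam y (nsubst x u t)

/-- αβη-convertibility of λ-terms.  The β-rule carries a capture-freeness side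
condition; arbitrary redexes are handled by first α-converting. -/
inductive Conv : LTerm → LTerm → Prop
  | refl (t) : Conv t t
  | symm {t u} : Conv t u → Conv u t
  | trans {t u v} : Conv t u → Conv u v → Conv t v
  | appc {t t' u u'} : Conv t t' → Conv u u' → Conv (.app t u) (.app t' u')
  | lamc {x t t'} : Conv t t' → Conv (.lam x t) (.lam x t')
  | alpha {t u} : AEq t u → Conv t u
  | beta {x t u} : (∀ v ∈ FVL u, v ∉ bvarsL t) → Conv (.app (.lam x t) u) (nsubst x u t)
  | eta {x t} : x ∉ FVL t → Conv (.lam x (.app t (.var x))) t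

/-- A fresh variable not occurring in a given finite set. -/
def freshVar (s : Finset LVar) : LVar :=
  .inl ((s.image (fun v => match v with | .inl a => a | .inr b => b)).sup id + 1)

/-- Capture-avoiding simultaneous renaming of free variables along `ρ`. -/
def casub (ρ : LVar → LVar) : LTerm → LTerm
  | .var z => .var (ρ z)
  | .const c => .const c
  | .app t u => .app (casub ρ t) (casub ρ u)
  | .lam z t =>
      if h : ∃ w ∈ FVL t, w ≠ z ∧ ρ w = z then
        let z' := freshVar (allVarsL t ∪ (FVL t).image ρ ∪ {z})
        .lam z' (casub ρ (swapL z z' t))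
      else .lam z (casub (fun w => if w = z then z else ρ w) t)
termination_by t => sizeL t
decreasing_by
  all_goals simp_wf
  all_goals simp [swapL, sizeL_renameAll, sizeL]
  all_goals omega

/-! Sorts and simple types -/

/-- Nominal sorts and arities: atom sorts `ν`, data sorts `δ`, abstraction
sorts `⟨ν⟩τ` and arities `τ₁×…×τₙ→δ`. -/
inductive NSort where
  | atom : ℕ → NSort
  | data : ℕ → NSort
  | abs : ℕ → NSort → NSort
  | arr : List NSort → ℕ → NSort

/-- Simple types with one base type per atom sort and per data sort. -/
inductive STy where
  | atomT : ℕ → STy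
  | dataT : ℕ → STy
  | arrT : STy → STy → STy
deriving DecidableEq

/-- The sort-to-type translation `⟦·⟧`. -/
def trSort : NSort → STy
  | .atom n => .atomT n
  | .data n => .dataT n
  | .abs n τ => .arrT (.atomT n) (trSort τ)
  | .arr τs d => τs.attach.foldr (fun τ T => .arrT (trSort τ.1) T) (.dataT d)
decreasing_by
  all_goals simp_wf
  all_goals first
    | (have := List.sizeOf_lt_of_mem τ.2; omega)
    | omega

/-- A sort is basic if it is an atom sort or a data sort. -/
def NSort.isBasic : NSort → Prop
  | .atom _ => True
  | .data _ => True
  | _ => False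

/-- A nominal signature: sorts of atoms, sorts of variables, arities of function symbols. -/
structure Sig where
  sortA : Atom → ℕ
  sortV : Var → NSort
  arF : ℕ → List NSort × ℕ

/-- The sorting judgement for nominal terms. -/
inductive HasSortN (S : Sig) : NTerm → NSort → Prop
  | atom (a) : HasSortN S (.atom a) (.atom (S.sortA a))
  | app {f ts} : ts.length = (S.arF f).1.length →
      (∀ p ∈ ts.zip (S.arF f).1, HasSortN S p.1 p.2) →
      HasSortN S (.app f ts) (.data (S.arF f).2)
  | abs {a t τ} : HasSortN S t τ → HasSortN S (.abs a t) (.abs (S.sortA a) τ)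
  | susp {π X} : (∀ a, S.sortA (permAtom π a) = S.sortA a) →
      HasSortN S (.susp π X) (S.sortV X)

/-! The translation from nominal terms to λ-terms -/

/-- The atoms capturable by `X` under `Δ`: the sublist of `as` of atoms `a` with `a # X ∉ Δ`. -/
def capList (as : List Atom) (Δ : Finset (Atom × Var)) (X : Var) : List Atom :=
  as.filter (fun a => (a, X) ∉ Δ)

/-- The translation `⟦t⟧_Δ` of a nominal term into a λ-term, relative to the
fixed atom list `as` and the freshness environment `Δ`. -/
def trT (as : List Atom) (Δ : Finset (Atom × Var)) : NTerm → LTerm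
  | .atom a => .var (.inl a)
  | .app f ts => appList (.const f) (ts.attach.map (fun t => trT as Δ t.1))
  | .abs a t => .lam (.inl a) (trT as Δ t)
  | .susp π X => appList (.var (.inr X))
      ((capList as Δ X).map (fun b => .var (.inl (permAtom π b))))
decreasing_by
  all_goals simp_wf
  all_goals first
    | (have := List.sizeOf_lt_of_mem t.2; omega)
    | omega

/-- Typing contexts as total functions. -/
abbrev Ctx := LVar → STy

/-- The simply-typed λ-calculus typing judgement. -/
inductive HasTy (cty : ℕ → STy) : Ctx → LTerm → STy → Prop
  | var (Γ : Ctx) (v) : HasTy cty Γ (.var v) (Γ v)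
  | const (Γ : Ctx) (c) : HasTy cty Γ (.const c) (cty c)
  | lam {Γ : Ctx} {x t T U} : HasTy cty (Function.update Γ x T) t U →
      HasTy cty Γ (.lam x t) (.arrT T U)
  | app {Γ : Ctx} {t u T U} : HasTy cty Γ t (.arrT T U) → HasTy cty Γ u T →
      HasTy cty Γ (.app t u) U

/-- Type of the constant translating a function symbol `f : τ₁×…×τₙ→δ`. -/
def ctySig (S : Sig) (f : ℕ) : STy :=
  (S.arF f).1.foldr (fun τ T => .arrT (trSort τ) T) (.dataT (S.arF f).2)

/-- Type assigned to the free variable translating a nominal variable `X`. -/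
def varTy (S : Sig) (as : List Atom) (Δ : Finset (Atom × Var)) (X : Var) : STy :=
  (capList as Δ X).foldr (fun a T => .arrT (.atomT (S.sortA a)) T) (trSort (S.sortV X))

/-- The typing context of the translation: atoms get their atom-sort base type
and nominal variables get the arrow type over their capturable atoms. -/
def trCtx (S : Sig) (as : List Atom) (Δ : Finset (Atom × Var)) : Ctx
  | .inl a => .atomT (S.sortA a)
  | .inr X => varTy S as Δ X

/-! Higher-order patterns -/

/-- `IsPattern B t` : in the scope of bound variables `B`, every free variable of `t`
is applied to a list of pairwise distinct bound variables. -/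
inductive IsPattern : List LVar → LTerm → Prop
  | bvar {B v} : v ∈ B → IsPattern B (.var v)
  | flex {B : List LVar} {X : Var} {args : List LVar} : (.inr X : LVar) ∉ B → (∀ a ∈ args, a ∈ B) → args.Nodup →
      IsPattern B (appList (.var (.inr X)) (args.map .var))
  | rigid {B h ts} : ((∃ c, h = .const c) ∨ (∃ v, h = .var v ∧ v ∈ B)) →
      (∀ t ∈ ts, IsPattern B t) → IsPattern B (appList h ts)
  | lam {B x t} : IsPattern (x :: B) t → IsPattern B (.lam x t)

/-! Unification problems and their translations -/

/-- Constraints of a (general) nominal unification problem. -/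
inductive NConstraint where
  | eq : NTerm → NTerm → NConstraint
  | fr : Atom → NTerm → NConstraint

/-- A nominal unification problem. -/
abbrev NProb := List NConstraint

/-- An equational nominal unification problem: a list of equality equations. -/
abbrev EProb := List (NTerm × NTerm)

/-- `⟨Δ, σ⟩` solves a constraint. -/
def solvesC (Δ : Finset (Atom × Var)) (σ : NSub) : NConstraint → Prop
  | .eq t u => Alpha Δ (applyN σ t) (applyN σ u)
  | .fr a t => Fresh Δ a (applyN σ t)

/-- `⟨Δ, σ⟩` solves a nominal unification problem. -/
def solvesP (Δ : Finset (Atom × Var)) (σ : NSub) (P : NProb) : Prop :=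
  ∀ c ∈ P, solvesC Δ σ c

/-- `⟨Δ, σ⟩` solves an equational nominal unification problem. -/
def solvesE (Δ : Finset (Atom × Var)) (σ : NSub) (P : EProb) : Prop :=
  ∀ e ∈ P, Alpha Δ (applyN σ e.1) (applyN σ e.2)

/-- A problem is equational if it contains no freshness constraints. -/
def isEquational (P : NProb) : Prop := ∀ c ∈ P, ∀ a t, c ≠ .fr a t

def sizeConstraint : NConstraint → ℕ
  | .eq t u => 1 + sizeN t + sizeN u
  | .fr _ t => 2 + sizeN t

def sizeNP (P : NProb) : ℕ := (P.map sizeConstraint).sum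

def sizeEP (P : EProb) : ℕ := (P.map (fun e => 1 + sizeN e.1 + sizeN e.2)).sum

/-- Variables of an equational problem. -/
def varsEP (P : EProb) : Finset Var := (P.map (fun e => nvars e.1 ∪ nvars e.2)).foldr (· ∪ ·) ∅

/-- Atoms of an equational problem. -/
def atomsEP (P : EProb) : Finset Atom := (P.map (fun e => natoms e.1 ∪ natoms e.2)).foldr (· ∪ ·) ∅

/-- Translation of an equation: both sides are translated with the empty
environment and closed under `λa₁…λaₙ`. -/
def trEq (as : List Atom) (e : NTerm × NTerm) : LTerm × LTerm :=
  (lamList (as.map .inl) (trT as ∅ e.1), lamList (as.map .inl) (trT as ∅ e.2))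

/-- Translation of an equational nominal problem into a higher-order problem. -/
def trProb (as : List Atom) (P : EProb) : List (LTerm × LTerm) := P.map (trEq as)

def sizeLP (Q : List (LTerm × LTerm)) : ℕ := (Q.map (fun e => 1 + sizeL e.1 + sizeL e.2)).sum

/-! λ-substitutions -/

/-- λ-substitutions over the (images of) nominal variables, with explicit domain. -/
abbrev LSub := Var → Option LTerm

/-- Domain of a λ-substitution. -/
def domL (σ : LSub) : Set Var := {X | (σ X).isSome}

/-- Application of a λ-substitution.  (In translated problems the values are
closed with respect to atom variables, so no capture can occur.) -/
def applyL (σ : LSub) : LTerm → LTerm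
  | .var (.inr X) => (σ X).getD (.var (.inr X))
  | .var v => .var v
  | .const c => .const c
  | .lam x t => .lam x (applyL σ t)
  | .app t u => .app (applyL σ t) (applyL σ u)

/-- `σ` solves a higher-order problem up to αβη. -/
def solvesL (σ : LSub) (Q : List (LTerm × LTerm)) : Prop :=
  ∀ e ∈ Q, Conv (applyL σ e.1) (applyL σ e.2)

/-- The translation `⟦σ⟧_Δ` of a nominal substitution. -/
def trSub (as : List Atom) (Δ : Finset (Atom × Var)) (σ : NSub) : LSub :=
  fun X => (σ X).map (fun t => lamList (as.map .inl) (trT as Δ t))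

/-! The reverse translation -/

/-- The reverse translation relation from λ-terms to nominal terms
(nondeterministic because of the choice of the permutation `π`). -/
inductive RevTr (as : List Atom) (Δ : Finset (Atom × Var)) : LTerm → NTerm → Prop
  | atom (a) : RevTr as Δ (.var (.inl a)) (.atom a)
  | appf {f ts us} : ts.length = us.length → (∀ p ∈ ts.zip us, RevTr as Δ p.1 p.2) →
      RevTr as Δ (appList (.const f) ts) (.app f us)
  | lam {a t u} : RevTr as Δ t u → RevTr as Δ (.lam (.inl a) t) (.abs a u)
  | susp {X : Var} {π : Perm0} {cs : List Atom} : (∀ a ∉ as, permAtom π a = a) →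
      cs.map (permAtom π) = capList as Δ X →
      RevTr as Δ (appList (.var (.inr X)) (cs.map (fun c => .var (.inl c))))
        (.susp π.reverse X)

/-- β-reduce the application of a λ-term to the atom variables `as`. -/
def applyAtoms : LTerm → List Atom → LTerm
  | .lam x t, a :: rest => applyAtoms (nsubst x (.var (.inl a)) t) rest
  | t, rest => appList t (rest.map (fun a => .var (.inl a)))

/-! "More general" relations on unifiers -/

/-- `Δ₂ ⊢ σ'(Δ₁)` : every freshness constraint of `Δ₁` holds after applying `σ'`. -/
def freshEnvHolds (Δ₂ : Finset (Atom × Var)) (σ' : NSub) (Δ₁ : Finset (Atom × Var)) : Prop :=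
  ∀ p ∈ Δ₁, Fresh Δ₂ p.1 (applyN σ' (nsuspV p.2))

/-- `⟨Δ₁,σ₁⟩` is more general than `⟨Δ₂,σ₂⟩`. -/
def moreGeneralN (Δ₁ : Finset (Atom × Var)) (σ₁ : NSub)
    (Δ₂ : Finset (Atom × Var)) (σ₂ : NSub) : Prop :=
  ∃ σ' : NSub, freshEnvHolds Δ₂ σ' Δ₁ ∧
    ∀ X ∈ domN σ₁ ∪ domN σ₂,
      Alpha Δ₂ (applyN σ' (applyN σ₁ (nsuspV X))) (applyN σ₂ (nsuspV X))

/-- A λ-substitution `σ₁` is more general than `σ₂` (modulo αβη). -/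
def moreGeneralL (σ₁ σ₂ : LSub) : Prop :=
  ∃ σ' : LSub, ∀ X ∈ domL σ₁ ∪ domL σ₂,
    Conv (applyL σ' (applyL σ₁ (.var (.inr X)))) (applyL σ₂ (.var (.inr X)))



/-! ### de Bruijn machinery -/

inductive DB where
  | bvar : ℕ → DB
  | fvar : LVar → DB
  | const : ℕ → DB
  | lam : DB → DB
  | app : DB → DB → DB
deriving DecidableEq

def idx? (v : LVar) : List LVar → Option ℕ
  | [] => none
  | w :: l => if w = v then some 0 else (idx? v l).map (· + 1)

theorem idx?_map_inj {f : LVar → LVar} (hf : Function.Injective f) (v : LVar) (l : List LVar) :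
    idx? (f v) (l.map f) = idx? v l := by
  induction l with
  | nil => rfl
  | cons w l ih =>
      simp only [List.map_cons, idx?, ih]
      by_cases h : w = v
      · simp [h]
      · rw [if_neg (fun hc => h (hf hc)), if_neg h]

theorem idx?_eq_none {v : LVar} {l : List LVar} : idx? v l = none ↔ v ∉ l := by
  induction l with
  | nil => simp [idx?]
  | cons w l ih =>
      by_cases h : w = v
      · simp [idx?, h]
      · simp [idx?, h, ih, Ne.symm h]

theorem idx?_lt {v : LVar} {l : List LVar} {i : ℕ} (h : idx? v l = some i) : i < l.length := by
  induction l generalizing i with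
  | nil => simp [idx?] at h
  | cons w l ih =>
      by_cases hw : w = v
      · simp only [idx?, if_pos hw] at h
        injection h with h; simp [← h]
      · simp only [idx?, if_neg hw, Option.map_eq_some_iff] at h
        obtain ⟨j, hj, rfl⟩ := h
        simpa using Nat.succ_lt_succ (ih hj)

theorem idx?_append (v : LVar) (l : List LVar) (x : LVar) :
    idx? v (l ++ [x]) = ((idx? v l).or (if x = v then some l.length else none)) := by
  induction l with
  | nil => simp [idx?]
  | cons w l ih =>
      have e1 : idx? v ((w :: l) ++ [x]) = if w = v then some 0 else (idx? v (l ++ [x])).map (· + 1) := rfl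
      have e2 : idx? v (w :: l) = if w = v then some 0 else (idx? v l).map (· + 1) := rfl
      rw [e1, e2, ih]
      by_cases hw : w = v
      · simp [hw]
      · simp only [if_neg hw]
        cases h : idx? v l <;> by_cases hx : x = v <;> simp [h, hx, Option.or]

def db (env : List LVar) : LTerm → DB
  | .var v => match idx? v env with
      | some i => .bvar i
      | none => .fvar v
  | .const c => .const c
  | .lam x t => .lam (db (x :: env) t)
  | .app t u => .app (db env t) (db env u)

def mapFv (f : LVar → LVar) : DB → DB
  | .bvar i => .bvar i
  | .fvar v => .fvar (f v)
  | .const c => .const c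
  | .lam D => .lam (mapFv f D)
  | .app D E => .app (mapFv f D) (mapFv f E)

def fvD : DB → Finset LVar
  | .bvar _ => ∅
  | .fvar v => {v}
  | .const _ => ∅
  | .lam D => fvD D
  | .app D E => fvD D ∪ fvD E

def openK (k : ℕ) (z : LVar) : DB → DB
  | .bvar i => if i = k then .fvar z else .bvar i
  | .fvar v => .fvar v
  | .const c => .const c
  | .lam D => .lam (openK (k+1) z D)
  | .app D E => .app (openK k z D) (openK k z E)

def closeK (k : ℕ) (z : LVar) : DB → DB
  | .bvar i => .bvar i
  | .fvar v => if v = z then .bvar k else .fvar v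
  | .const c => .const c
  | .lam D => .lam (closeK (k+1) z D)
  | .app D E => .app (closeK k z D) (closeK k z E)

def lcD (k : ℕ) : DB → Prop
  | .bvar i => i < k
  | .fvar _ => True
  | .const _ => True
  | .lam D => lcD (k+1) D
  | .app D E => lcD k D ∧ lcD k E

theorem lcD_db (env : List LVar) (t : LTerm) : lcD env.length (db env t) := by
  induction t generalizing env with
  | var v =>
      simp only [db]
      cases h : idx? v env with
      | some i => exact idx?_lt h
      | none => trivial
  | const c => trivial
  | lam x t ih => exact ih (x :: env)
  | app t u iht ihu => exact ⟨iht env, ihu env⟩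

/-- renaming lemma -/
theorem db_renameAll {f : LVar → LVar} (hf : Function.Injective f) (t : LTerm) (env : List LVar) :
    db (env.map f) (renameAll f t) = mapFv f (db env t) := by
  induction t generalizing env with
  | var v =>
      simp only [renameAll, db, idx?_map_inj hf]
      cases idx? v env <;> simp [mapFv]
  | const c => rfl
  | lam x t ih =>
      simp only [renameAll, db, mapFv]
      rw [← ih (x :: env)]; rfl
  | app t u iht ihu => simp only [renameAll, db, mapFv, iht, ihu]

/-- closing lemma -/
theorem db_append (t : LTerm) (env : List LVar) (x : LVar) :
    db (env ++ [x]) t = closeK env.length x (db env t) := by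
  induction t generalizing env with
  | var v =>
      simp only [db, idx?_append]
      cases h : idx? v env with
      | some i => simp [closeK]
      | none =>
          have hv : v ∉ env := idx?_eq_none.mp h
          by_cases hx : x = v
          · simp [hx, closeK, Option.or]
          · simp [hx, closeK, Option.or, Ne.symm hx]
  | const c => rfl
  | lam y t ih =>
      simp only [db, closeK]
      rw [show y :: (env ++ [x]) = (y :: env) ++ [x] from rfl, ih (y :: env)]
      rfl
  | app t u iht ihu => simp only [db, closeK, iht, ihu]

theorem open_closeK {k : ℕ} {D : DB} (h : lcD k D) (x : LVar) :
    openK k x (closeK k x D) = D := by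
  induction D generalizing k with
  | bvar i => simp only [lcD] at h; simp [closeK, openK, Nat.ne_of_lt h]
  | fvar v =>
      by_cases hv : v = x
      · simp [closeK, openK, hv]
      · simp [closeK, openK, hv]
  | const c => rfl
  | lam D ih => simp only [closeK, openK, ih h]
  | app D E ihD ihE => simp only [lcD] at h; simp only [closeK, openK, ihD h.1, ihE h.2]

theorem openK_closeK_ne {k : ℕ} {D : DB} (h : lcD k D) (x z : LVar) :
    openK k z (closeK k x D) = mapFv (fun v => if v = x then z else v) D := by
  induction D generalizing k with
  | bvar i => simp only [lcD] at h; simp [closeK, openK, mapFv, Nat.ne_of_lt h]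
  | fvar v =>
      by_cases hv : v = x
      · simp [closeK, openK, mapFv, hv]
      · simp [closeK, openK, mapFv, hv]
  | const c => rfl
  | lam D ih => simp only [closeK, openK, mapFv, ih h]
  | app D E ihD ihE => simp only [lcD] at h; simp only [closeK, openK, mapFv, ihD h.1, ihE h.2]

theorem mapFv_congr {f g : LVar → LVar} {D : DB} (h : ∀ v ∈ fvD D, f v = g v) :
    mapFv f D = mapFv g D := by
  induction D with
  | bvar i => rfl
  | fvar v => simp only [mapFv, fvD] at *; rw [h v (by simp)]
  | const c => rfl
  | lam D ih => simp only [mapFv, fvD] at *; rw [ih h]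
  | app D E ihD ihE =>
      simp only [mapFv, fvD] at *
      rw [ihD fun v hv => h v (Finset.mem_union_left _ hv),
          ihE fun v hv => h v (Finset.mem_union_right _ hv)]

theorem mapFv_id {D : DB} : mapFv (fun v => v) D = D := by
  induction D <;> simp [mapFv, *]

theorem mapFv_id_of {f : LVar → LVar} {D : DB} (h : ∀ v ∈ fvD D, f v = v) :
    mapFv f D = D := by
  rw [mapFv_congr h, mapFv_id]

theorem closeK_mapFv {f : LVar → LVar} (hf : Function.Injective f) (k : ℕ) (x : LVar) (D : DB) :
    closeK k (f x) (mapFv f D) = mapFv f (closeK k x D) := by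
  induction D generalizing k with
  | bvar i => rfl
  | fvar v =>
      by_cases hv : v = x
      · simp [mapFv, closeK, hv]
      · have : f v ≠ f x := fun hc => hv (hf hc)
        simp [mapFv, closeK, hv, this]
  | const c => rfl
  | lam D ih => simp only [mapFv, closeK, ih]
  | app D E ihD ihE => simp only [mapFv, closeK, ihD, ihE]

theorem fvD_db (env : List LVar) (t : LTerm) :
    fvD (db env t) = FVL t \ env.toFinset := by
  induction t generalizing env with
  | var v =>
      simp only [db]
      cases h : idx? v env with
      | some i =>
          have hv : v ∈ env := by
            by_contra hc
            rw [idx?_eq_none.mpr hc] at h; cases h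
          simp only [fvD, FVL]
          ext w
          simp only [Finset.notMem_empty, false_iff, Finset.mem_sdiff, Finset.mem_singleton,
            List.mem_toFinset, not_and, not_not]
          rintro rfl; exact hv
      | none =>
          have : v ∉ env := idx?_eq_none.mp h
          simp only [fvD, FVL]
          ext w; simp only [Finset.mem_singleton, Finset.mem_sdiff, List.mem_toFinset]
          constructor
          · rintro rfl; exact ⟨rfl, this⟩
          · exact fun h => h.1
  | const c => simp [fvD, FVL, db]
  | lam x t ih =>
      simp only [db, fvD, FVL, ih (x :: env)]
      ext w
      simp only [Finset.mem_sdiff, List.toFinset_cons, Finset.mem_insert, Finset.mem_erase,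
        List.mem_toFinset]
      tauto
  | app t u iht ihu =>
      simp only [db, fvD, FVL, iht, ihu, Finset.union_sdiff_distrib]

theorem fvD_closeK (k : ℕ) (x : LVar) (D : DB) : fvD (closeK k x D) = (fvD D).erase x := by
  induction D generalizing k with
  | bvar i => simp [closeK, fvD]
  | fvar v =>
      by_cases hv : v = x
      · subst hv; simp [closeK, fvD, Finset.erase_singleton]
      · simp only [closeK, if_neg hv, fvD]
        rw [Finset.erase_eq_of_notMem (by simp [Ne.symm hv])]
  | const c => simp [closeK, fvD]
  | lam D ih => simp [closeK, fvD, ih]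
  | app D E ihD ihE => simp [closeK, fvD, ihD, ihE, Finset.erase_union_distrib]

theorem FVL_subset_allVarsL (t : LTerm) : FVL t ⊆ allVarsL t := by
  induction t with
  | var v => simp [FVL, allVarsL]
  | const c => simp [FVL, allVarsL]
  | lam x t ih =>
      simp only [FVL, allVarsL]
      exact (Finset.erase_subset _ _).trans (ih.trans (Finset.subset_insert _ _))
  | app t u iht ihu => exact Finset.union_subset_union iht ihu

theorem varMap_involutive (x y : LVar) : Function.Involutive (varMap x y) := by
  intro z; unfold varMap; split_ifs <;> simp_all

theorem varMap_injective (x y : LVar) : Function.Injective (varMap x y) :=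
  (varMap_involutive x y).injective

theorem freshVar_aux (f : LVar → ℕ) (s : Finset LVar) (hf : ∀ a : Atom, f (.inl a) = a) :
    (Sum.inl ((s.image f).sup id + 1) : LVar) ∉ s := by
  intro h
  have h2 := Finset.le_sup (f := id) (Finset.mem_image_of_mem f h)
  rw [hf] at h2
  simp only [id_eq] at h2
  omega

theorem freshVar_not_mem (s : Finset LVar) : freshVar s ∉ s :=
  freshVar_aux _ s (fun _ => rfl)

/-- db with any env is determined by db with the empty env -/
theorem db_congr_env {t u : LTerm} (h : db [] t = db [] u) (env : List LVar) :
    db env t = db env u := by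
  induction env using List.reverseRecOn with
  | nil => exact h
  | append_singleton env x ih => rw [db_append, db_append, ih]

theorem AEq_iff_db {t u : LTerm} : AEq t u ↔ db [] t = db [] u := by
  constructor
  · intro h
    induction h with
    | var v => rfl
    | const c => rfl
    | app _ _ iht ihu => simp only [db, iht, ihu]
    | @lam x y t u z hzt hzu hzx hzy _ ih =>
        have g1inj := varMap_injective x z
        have g2inj := varMap_injective y z
        have e1 : db [] (swapL x z t) = mapFv (varMap x z) (db [] t) := db_renameAll g1inj t []
        have e2 : db [] (swapL y z u) = mapFv (varMap y z) (db [] u) := db_renameAll g2inj u []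
        have c1 : closeK 0 x (db [] t) = closeK 0 z (db [] (swapL x z t)) := by
          rw [e1]
          have hx : varMap x z x = z := by simp [varMap]
          refine Eq.symm ?_
          calc closeK 0 z (mapFv (varMap x z) (db [] t))
              = closeK 0 (varMap x z x) (mapFv (varMap x z) (db [] t)) := by rw [hx]
            _ = mapFv (varMap x z) (closeK 0 x (db [] t)) := closeK_mapFv g1inj 0 x _
            _ = closeK 0 x (db [] t) := mapFv_id_of ?_
          intro v hv
          rw [fvD_closeK] at hv
          have hv1 : v ≠ x := (Finset.mem_erase.mp hv).1
          have hv2 : v ∈ FVL t := by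
            have := (Finset.mem_erase.mp hv).2
            rw [fvD_db] at this
            simpa using this
          have hvz : v ≠ z := fun hc => hzt (FVL_subset_allVarsL t (hc ▸ hv2))
          simp [varMap, hv1, hvz]
        have c2 : closeK 0 y (db [] u) = closeK 0 z (db [] (swapL y z u)) := by
          rw [e2]
          have hy : varMap y z y = z := by simp [varMap]
          refine Eq.symm ?_
          calc closeK 0 z (mapFv (varMap y z) (db [] u))
              = closeK 0 (varMap y z y) (mapFv (varMap y z) (db [] u)) := by rw [hy]
            _ = mapFv (varMap y z) (closeK 0 y (db [] u)) := closeK_mapFv g2inj 0 y _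
            _ = closeK 0 y (db [] u) := mapFv_id_of ?_
          intro v hv
          rw [fvD_closeK] at hv
          have hv1 : v ≠ y := (Finset.mem_erase.mp hv).1
          have hv2 : v ∈ FVL u := by
            have := (Finset.mem_erase.mp hv).2
            rw [fvD_db] at this
            simpa using this
          have hvz : v ≠ z := fun hc => hzu (FVL_subset_allVarsL u (hc ▸ hv2))
          simp [varMap, hv1, hvz]
        show DB.lam (db [x] t) = DB.lam (db [y] u)
        have hx' : db [x] t = closeK 0 x (db [] t) := db_append t [] x
        have hy' : db [y] u = closeK 0 y (db [] u) := db_append u [] y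
        rw [hx', hy', c1, c2, ih]
  · intro h
    -- strong induction on size
    have main : ∀ n t u, sizeL t ≤ n → db [] t = db [] u → AEq t u := by
      intro n
      induction n with
      | zero => intro t u hs; cases t <;> simp [sizeL] at hs
      | succ n ih =>
          intro t u hs h
          cases t with
          | var v =>
              cases u with
              | var w => simp only [db, idx?] at h; injection h with h; rw [h]; exact AEq.var w
              | const c => simp [db, idx?] at h
              | lam y u0 => simp [db, idx?] at h
              | app u1 u2 => simp [db, idx?] at h
          | const c =>
              cases u with
              | var w => simp [db, idx?] at h
              | const c' => simp only [db] at h; injection h with h; rw [h]; exact AEq.const c'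
              | lam y u0 => simp [db] at h
              | app u1 u2 => simp [db] at h
          | app t1 t2 =>
              cases u with
              | var w => simp [db, idx?] at h
              | const c => simp [db] at h
              | lam y u0 => simp [db] at h
              | app u1 u2 =>
                  simp only [db, DB.app.injEq] at h
                  simp only [sizeL] at hs
                  exact AEq.app (ih t1 u1 (by omega) h.1) (ih t2 u2 (by omega) h.2)
          | lam x t0 =>
              cases u with
              | var w => simp [db, idx?] at h
              | const c => simp [db] at h
              | app u1 u2 => simp [db] at h
              | lam y u0 =>
                  simp only [db, DB.lam.injEq] at h
                  set z := freshVar (allVarsL t0 ∪ allVarsL u0 ∪ {x, y}) with hz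
                  have hzmem := freshVar_not_mem (allVarsL t0 ∪ allVarsL u0 ∪ {x, y})
                  rw [← hz] at hzmem
                  simp only [Finset.mem_union, Finset.mem_insert, Finset.mem_singleton,
                    not_or] at hzmem
                  obtain ⟨⟨hzt, hzu⟩, hzx, hzy⟩ := hzmem
                  refine AEq.lam z hzt hzu hzx hzy ?_
                  have hkey : db [] (swapL x z t0) = db [] (swapL y z u0) := by
                    have e1 : db [] (swapL x z t0) = mapFv (varMap x z) (db [] t0) :=
                      db_renameAll (varMap_injective x z) t0 []
                    have e2 : db [] (swapL y z u0) = mapFv (varMap y z) (db [] u0) :=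
                      db_renameAll (varMap_injective y z) u0 []
                    have hx' : db [x] t0 = closeK 0 x (db [] t0) := db_append t0 [] x
                    have hy' : db [y] u0 = closeK 0 y (db [] u0) := db_append u0 [] y
                    have lct : lcD 0 (db [] t0) := lcD_db [] t0
                    have lcu : lcD 0 (db [] u0) := lcD_db [] u0
                    have := congrArg (openK 0 z) h
                    rw [hx', hy', openK_closeK_ne lct, openK_closeK_ne lcu] at this
                    rw [e1, e2]
                    rw [mapFv_congr (f := varMap x z) (g := fun v => if v = x then z else v),
                        mapFv_congr (f := varMap y z) (g := fun v => if v = y then z else v)]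
                    · exact this
                    · intro v hv
                      rw [fvD_db] at hv
                      have hvu : v ∈ FVL u0 := by simpa using hv
                      have hvz : v ≠ z := fun hc => hzu (FVL_subset_allVarsL u0 (hc ▸ hvu))
                      simp [varMap, hvz]
                    · intro v hv
                      rw [fvD_db] at hv
                      have hvt : v ∈ FVL t0 := by simpa using hv
                      have hvz : v ≠ z := fun hc => hzt (FVL_subset_allVarsL t0 (hc ▸ hvt))
                      simp [varMap, hvz]
                  exact ih _ _ (by
                    simp only [sizeL] at hs
                    simp only [swapL, sizeL_renameAll]; omega) hkey
    exact main (sizeL t) t u le_rfl h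

theorem AEq_refl (t : LTerm) : AEq t t := AEq_iff_db.mpr rfl

/-! ### application spines -/

theorem db_appList (env : List LVar) (h : LTerm) (ts : List LTerm) :
    db env (appList h ts) = List.foldl DB.app (db env h) (ts.map (db env)) := by
  induction ts generalizing h with
  | nil => rfl
  | cons t ts ih =>
      show db env (appList (.app h t) ts) = _
      rw [ih]
      rfl

def spineD : DB → DB × List DB
  | .app a b => ((spineD a).1, (spineD a).2 ++ [b])
  | D => (D, [])

theorem spineD_notApp {D : DB} (hD : ∀ a b, D ≠ .app a b) : spineD D = (D, []) := by
  cases D with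
  | app a b => exact absurd rfl (hD a b)
  | bvar i => rfl
  | fvar v => rfl
  | const c => rfl
  | lam E => rfl

theorem spineD_foldl (h : DB) (l : List DB) (hh : ∀ a b, h ≠ .app a b) :
    spineD (List.foldl DB.app h l) = (h, l) := by
  induction l using List.reverseRecOn with
  | nil => exact spineD_notApp hh
  | append_singleton l b ih =>
      rw [List.foldl_append]
      show ((spineD (List.foldl DB.app h l)).1, (spineD (List.foldl DB.app h l)).2 ++ [b]) = _
      rw [ih]

/-! ### Nominal-side auxiliary lemmas -/

theorem swapAtom_swapAtom (a b c : Atom) : swapAtom a b (swapAtom a b c) = c := by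
  unfold swapAtom; split_ifs <;> simp_all

theorem permAtom_cons (p : Atom × Atom) (π : Perm0) (a : Atom) :
    permAtom (p :: π) a = swapAtom p.1 p.2 (permAtom π a) := rfl

theorem permAtom_append (π₁ π₂ : Perm0) (a : Atom) :
    permAtom (π₁ ++ π₂) a = permAtom π₁ (permAtom π₂ a) := by
  simp [permAtom, List.foldr_append]

theorem permAtom_reverse_cancel (π : Perm0) (a : Atom) :
    permAtom π.reverse (permAtom π a) = a := by
  induction π generalizing a with
  | nil => rfl
  | cons p π ih =>
      rw [List.reverse_cons, permAtom_cons, permAtom_append]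
      rw [show permAtom [p] (swapAtom p.1 p.2 (permAtom π a))
          = swapAtom p.1 p.2 (swapAtom p.1 p.2 (permAtom π a)) from rfl, swapAtom_swapAtom]
      exact ih a

theorem permAtom_reverse_cancel' (π : Perm0) (a : Atom) :
    permAtom π (permAtom π.reverse a) = a := by
  have := permAtom_reverse_cancel π.reverse a
  rwa [List.reverse_reverse] at this

theorem permAtom_fix {π : Perm0} {a : Atom} (h : ∀ p ∈ π, a ≠ p.1 ∧ a ≠ p.2) :
    permAtom π a = a := by
  induction π with
  | nil => rfl
  | cons p π ih =>
      rw [permAtom_cons, ih (fun q hq => h q (List.mem_cons_of_mem p hq))]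
      have := h p (List.mem_cons_self)
      unfold swapAtom
      rw [if_neg this.1, if_neg this.2]

theorem permAtom_cases (π : Perm0) (a : Atom) :
    permAtom π a = a ∨ ∃ p ∈ π, permAtom π a = p.1 ∨ permAtom π a = p.2 := by
  induction π with
  | nil => left; rfl
  | cons p π ih =>
      rw [permAtom_cons]
      unfold swapAtom
      split_ifs with h1 h2
      · right; exact ⟨p, List.mem_cons_self, Or.inr rfl⟩
      · right; exact ⟨p, List.mem_cons_self, Or.inl rfl⟩
      · rcases ih with h | ⟨q, hq, hh⟩
        · left; exact h
        · right; exact ⟨q, List.mem_cons_of_mem p hq, hh⟩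

/-! folds over attached lists -/

theorem mem_foldr_union (l : List (Finset ℕ)) (x : ℕ) :
    x ∈ l.foldr (· ∪ ·) ∅ ↔ ∃ s ∈ l, x ∈ s := by
  induction l with
  | nil => simp
  | cons s l ih => simp [ih]

theorem attach_foldr_union {α : Type} (l : List α) (g : α → Finset ℕ) (x : ℕ) :
    x ∈ l.attach.foldr (fun t s => g t.1 ∪ s) ∅ ↔ ∃ t ∈ l, x ∈ g t := by
  rw [show (l.attach.foldr (fun t s => g t.1 ∪ s) ∅ : Finset ℕ)
      = (l.attach.map (fun t => g t.1)).foldr (· ∪ ·) ∅ from (List.foldr_map).symm]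
  rw [show l.attach.map (fun t => g t.1) = l.map g from by simp]
  rw [mem_foldr_union]
  simp

/-! natoms and sizeN -/

theorem mem_natoms_app {x : Atom} {f : ℕ} {ts : List NTerm} :
    x ∈ natoms (.app f ts) ↔ ∃ t ∈ ts, x ∈ natoms t := by
  have h : natoms (.app f ts) = ts.attach.foldr (fun t s => natoms t.1 ∪ s) ∅ := by
    simp only [natoms]
  rw [h]
  exact attach_foldr_union ts natoms x

theorem natoms_atom (a : Atom) : natoms (.atom a) = {a} := by simp only [natoms]

theorem natoms_abs (a : Atom) (t : NTerm) : natoms (.abs a t) = insert a (natoms t) := by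
  simp only [natoms]

theorem mem_natoms_susp {x : Atom} {π : Perm0} {X : Var} :
    x ∈ natoms (.susp π X) ↔ ∃ p ∈ π, x = p.1 ∨ x = p.2 := by
  have h : natoms (.susp π X) = π.foldr (fun p s => insert p.1 (insert p.2 s)) ∅ := by
    simp only [natoms]
  rw [h]; clear h
  induction π with
  | nil => simp
  | cons p π ih =>
      simp only [List.foldr_cons, Finset.mem_insert, ih, List.mem_cons]
      constructor
      · rintro (h | h | ⟨q, hq, hh⟩)
        · exact ⟨p, Or.inl rfl, Or.inl h⟩
        · exact ⟨p, Or.inl rfl, Or.inr h⟩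
        · exact ⟨q, Or.inr hq, hh⟩
      · rintro ⟨q, rfl | hq, hh⟩
        · rcases hh with h | h
          · exact Or.inl h
          · exact Or.inr (Or.inl h)
        · exact Or.inr (Or.inr ⟨q, hq, hh⟩)

theorem sizeN_app (f : ℕ) (ts : List NTerm) : sizeN (.app f ts) = 1 + (ts.map sizeN).sum := by
  have h : sizeN (.app f ts) = 1 + (ts.attach.map (fun t => sizeN t.1)).sum := by
    simp only [sizeN]
  rw [h, show ts.attach.map (fun t => sizeN t.1) = ts.map sizeN from by simp]

theorem sizeN_abs (a : Atom) (t : NTerm) : sizeN (.abs a t) = 1 + sizeN t := by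
  simp only [sizeN]

theorem sizeN_pos (t : NTerm) : 0 < sizeN t := by
  cases t with
  | atom a => simp only [sizeN]; omega
  | app f ts => rw [sizeN_app]; omega
  | abs a t => rw [sizeN_abs]; omega
  | susp π X => simp only [sizeN]; omega

theorem sizeN_lt_of_mem {t : NTerm} {f : ℕ} {ts : List NTerm} (h : t ∈ ts) :
    sizeN t < sizeN (.app f ts) := by
  rw [sizeN_app]
  have := List.single_le_sum (l := ts.map sizeN) (fun x _ => Nat.zero_le x) (sizeN t)
    (List.mem_map_of_mem (f := sizeN) h)
  omega

/-- strong induction on the size of a nominal term -/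
theorem nterm_strong_ind {P : NTerm → Prop}
    (H : ∀ t, (∀ s, sizeN s < sizeN t → P s) → P t) : ∀ t, P t := by
  intro t
  generalize hn : sizeN t = n
  induction n using Nat.strong_induction_on generalizing t with
  | _ n ih => exact H t (fun s hs => ih (sizeN s) (hn ▸ hs) s rfl)

/-! permTerm equations -/

theorem permTerm_atom (π : Perm0) (a : Atom) :
    permTerm π (.atom a) = .atom (permAtom π a) := by simp only [permTerm]

theorem permTerm_app (π : Perm0) (f : ℕ) (ts : List NTerm) :
    permTerm π (.app f ts) = .app f (ts.map (permTerm π)) := by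
  have h : permTerm π (.app f ts) = .app f (ts.attach.map (fun t => permTerm π t.1)) := by
    simp only [permTerm]
  rw [h, show ts.attach.map (fun t => permTerm π t.1) = ts.map (permTerm π) from by simp]

theorem permTerm_abs (π : Perm0) (a : Atom) (t : NTerm) :
    permTerm π (.abs a t) = .abs (permAtom π a) (permTerm π t) := by simp only [permTerm]

theorem permTerm_susp (π π' : Perm0) (X : Var) :
    permTerm π (.susp π' X) = .susp (π ++ π') X := by simp only [permTerm]

theorem mem_natoms_permTerm :
    ∀ (u : NTerm) {π : Perm0} {c : Atom}, c ∈ natoms (permTerm π u) →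
      (∃ p ∈ π, c = p.1 ∨ c = p.2) ∨ c ∈ natoms u := by
  refine nterm_strong_ind ?_
  intro u IH π c h
  cases u with
  | atom a =>
      rw [permTerm_atom, natoms_atom] at h
      rw [Finset.mem_singleton] at h
      subst h
      rcases permAtom_cases π a with h | ⟨p, hp, hh⟩
      · right; rw [h, natoms_atom]; exact Finset.mem_singleton_self a
      · left; exact ⟨p, hp, by tauto⟩
  | app f ts =>
      rw [permTerm_app, mem_natoms_app] at h
      obtain ⟨t', ht', hc⟩ := h
      obtain ⟨s, hs, rfl⟩ := List.mem_map.mp ht'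
      rcases IH s (sizeN_lt_of_mem hs) hc with h | h
      · left; exact h
      · right; exact mem_natoms_app.mpr ⟨s, hs, h⟩
  | abs a t =>
      rw [permTerm_abs, natoms_abs] at h
      rw [Finset.mem_insert] at h
      rcases h with h | h
      · subst h
        rcases permAtom_cases π a with h | ⟨p, hp, hh⟩
        · right; rw [h, natoms_abs]; exact Finset.mem_insert_self a _
        · left; exact ⟨p, hp, by tauto⟩
      · rcases IH t (by rw [sizeN_abs]; omega) h with h | h
        · left; exact h
        · right; rw [natoms_abs]; exact Finset.mem_insert_of_mem h
  | susp π' X =>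
      rw [permTerm_susp, mem_natoms_susp] at h
      obtain ⟨p, hp, hh⟩ := h
      rcases List.mem_append.mp hp with hp | hp
      · left; exact ⟨p, hp, hh⟩
      · right; exact mem_natoms_susp.mpr ⟨p, hp, hh⟩

/-! FVL of application spines -/

theorem mem_FVL_appList {v : LVar} {h : LTerm} {ts : List LTerm} :
    v ∈ FVL (appList h ts) ↔ v ∈ FVL h ∨ ∃ t ∈ ts, v ∈ FVL t := by
  induction ts generalizing h with
  | nil => simp [appList]
  | cons t ts ih =>
      show v ∈ FVL (appList (.app h t) ts) ↔ _
      rw [ih]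
      simp only [FVL, Finset.mem_union, List.mem_cons]
      constructor
      · rintro ((h | h) | ⟨s, hs, hv⟩)
        · exact Or.inl h
        · exact Or.inr ⟨t, Or.inl rfl, h⟩
        · exact Or.inr ⟨s, Or.inr hs, hv⟩
      · rintro (h | ⟨s, rfl | hs, hv⟩)
        · exact Or.inl (Or.inl h)
        · exact Or.inl (Or.inr hv)
        · exact Or.inr ⟨s, hs, hv⟩

/-! trT equations -/

theorem trT_atom (as : List Atom) (Δ : Finset (Atom × Var)) (a : Atom) :
    trT as Δ (.atom a) = .var (.inl a) := by simp only [trT]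

theorem trT_app (as : List Atom) (Δ : Finset (Atom × Var)) (f : ℕ) (ts : List NTerm) :
    trT as Δ (.app f ts) = appList (.const f) (ts.map (trT as Δ)) := by
  have h : trT as Δ (.app f ts) = appList (.const f) (ts.attach.map (fun t => trT as Δ t.1)) := by
    simp only [trT]
  rw [h, show ts.attach.map (fun t => trT as Δ t.1) = ts.map (trT as Δ) from by simp]

theorem trT_abs (as : List Atom) (Δ : Finset (Atom × Var)) (a : Atom) (t : NTerm) :
    trT as Δ (.abs a t) = .lam (.inl a) (trT as Δ t) := by simp only [trT]

theorem trT_susp (as : List Atom) (Δ : Finset (Atom × Var)) (π : Perm0) (X : Var) :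
    trT as Δ (.susp π X) = appList (.var (.inr X))
      ((capList as Δ X).map (fun b => .var (.inl (permAtom π b)))) := by simp only [trT]

theorem mem_capList {as : List Atom} {Δ : Finset (Atom × Var)} {X : Var} {b : Atom} :
    b ∈ capList as Δ X ↔ b ∈ as ∧ (b, X) ∉ Δ := by
  simp [capList]

theorem renameAll_appList (f : LVar → LVar) (h : LTerm) (ts : List LTerm) :
    renameAll f (appList h ts) = appList (renameAll f h) (ts.map (renameAll f)) := by
  induction ts generalizing h with
  | nil => rfl
  | cons t ts ih =>
      show renameAll f (appList (.app h t) ts) = _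
      rw [ih]
      rfl

theorem trT_permTerm (as : List Atom) (Δ : Finset (Atom × Var)) :
    ∀ (u : NTerm) (π : Perm0),
      trT as Δ (permTerm π u) = renameAll (Sum.map (permAtom π) id) (trT as Δ u) := by
  refine nterm_strong_ind ?_
  intro u IH π
  cases u with
  | atom a => rw [permTerm_atom, trT_atom, trT_atom]; rfl
  | app f ts =>
      rw [permTerm_app, trT_app, trT_app, renameAll_appList, List.map_map, List.map_map]
      congr 1
      apply List.map_congr_left
      intro t ht
      exact IH t (sizeN_lt_of_mem ht) π
  | abs a t =>
      rw [permTerm_abs, trT_abs, trT_abs]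
      show LTerm.lam (.inl (permAtom π a)) _ = LTerm.lam _ _
      rw [IH t (by rw [sizeN_abs]; omega) π]
      rfl
  | susp π' X =>
      rw [permTerm_susp, trT_susp, trT_susp, renameAll_appList, List.map_map]
      congr 1
      apply List.map_congr_left
      intro b hb
      show LTerm.var (.inl (permAtom (π ++ π') b)) = LTerm.var (.inl (permAtom π (permAtom π' b)))
      rw [permAtom_append]

theorem trT_swapTerm (as : List Atom) (Δ : Finset (Atom × Var)) (a b : Atom) (u : NTerm) :
    trT as Δ (swapTerm a b u) = swapL (.inl a) (.inl b) (trT as Δ u) := by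
  show trT as Δ (permTerm [(a, b)] u) = _
  rw [trT_permTerm]
  unfold swapL
  congr 1
  funext v
  cases v with
  | inl c =>
      simp only [Sum.map, varMap, id]
      split_ifs <;> simp_all [permAtom, swapAtom]
  | inr X => simp [Sum.map, varMap]

/-! freshness vs free variables of the translation -/

theorem fresh_not_fvl (as : List Atom) {Δ : Finset (Atom × Var)} {a : Atom} {u : NTerm}
    (h : Fresh Δ a u) : (Sum.inl a : LVar) ∉ FVL (trT as Δ u) := by
  induction h with
  | @atom a' hne => rw [trT_atom]; simp [FVL]; exact hne
  | @susp π X hmem =>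
      rw [trT_susp]
      intro hc
      rw [mem_FVL_appList] at hc
      rcases hc with hc | ⟨t, ht, hv⟩
      · simp [FVL] at hc
      · obtain ⟨c, hcmem, rfl⟩ := List.mem_map.mp ht
        simp only [FVL, Finset.mem_singleton, Sum.inl.injEq] at hv
        have hcc : c = permAtom π.reverse a := by
          have h2 := congrArg (permAtom π.reverse) hv
          rw [permAtom_reverse_cancel] at h2
          exact h2.symm
        exact (mem_capList.mp hcmem).2 (hcc ▸ hmem)
  | @app f ts hts ih =>
      rw [trT_app]
      intro hc
      rw [mem_FVL_appList] at hc
      rcases hc with hc | ⟨t, ht, hv⟩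
      · simp [FVL] at hc
      · obtain ⟨s, hs, rfl⟩ := List.mem_map.mp ht
        exact ih s hs hv
  | abs1 => rw [trT_abs]; simp [FVL]
  | @abs2 a a' t hne ih =>
      rw [trT_abs]
      simp only [FVL, Finset.mem_erase, not_and]
      intro _ hc
      exact ih hc

theorem not_fvl_fresh (as : List Atom) (Δ : Finset (Atom × Var)) :
    ∀ (u : NTerm), ∀ a : Atom, a ∈ as → natoms u ⊆ as.toFinset →
      (Sum.inl a : LVar) ∉ FVL (trT as Δ u) → Fresh Δ a u := by
  refine nterm_strong_ind ?_
  intro u IH a ha hsub h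
  cases u with
  | atom a' =>
      rw [trT_atom] at h
      simp only [FVL, Finset.mem_singleton, Sum.inl.injEq] at h
      exact Fresh.atom h
  | app f ts =>
      refine Fresh.app ?_
      intro t ht
      refine IH t (sizeN_lt_of_mem ht) a ha ?_ ?_
      · exact fun x hx => hsub (mem_natoms_app.mpr ⟨t, ht, hx⟩)
      · intro hc
        rw [trT_app] at h
        exact h (mem_FVL_appList.mpr (Or.inr ⟨trT as Δ t, List.mem_map_of_mem ht, hc⟩))
  | abs a' t =>
      by_cases haa : a = a'
      · subst haa; exact Fresh.abs1
      · refine Fresh.abs2 haa (IH t (by rw [sizeN_abs]; omega) a ha ?_ ?_)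
        · intro x hx
          exact hsub (by rw [natoms_abs]; exact Finset.mem_insert_of_mem hx)
        · intro hc
          rw [trT_abs] at h
          refine h ?_
          simp only [FVL, Finset.mem_erase]
          exact ⟨by simp [haa], hc⟩
  | susp π X =>
      refine Fresh.susp ?_
      have hπas : ∀ p ∈ π, p.1 ∈ as ∧ p.2 ∈ as := by
        intro p hp
        constructor
        · exact List.mem_toFinset.mp (hsub (mem_natoms_susp.mpr ⟨p, hp, Or.inl rfl⟩))
        · exact List.mem_toFinset.mp (hsub (mem_natoms_susp.mpr ⟨p, hp, Or.inr rfl⟩))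
      have hc_as : permAtom π.reverse a ∈ as := by
        rcases permAtom_cases π.reverse a with hh | ⟨p, hp, hh⟩
        · rwa [hh]
        · have := hπas p (List.mem_reverse.mp hp)
          rcases hh with hh | hh <;> rw [hh] <;> tauto
      by_contra hcd
      have hc_cap : permAtom π.reverse a ∈ capList as Δ X := mem_capList.mpr ⟨hc_as, hcd⟩
      refine h ?_
      rw [trT_susp, mem_FVL_appList]
      refine Or.inr ⟨.var (.inl (permAtom π (permAtom π.reverse a))),
        List.mem_map_of_mem hc_cap, ?_⟩
      rw [permAtom_reverse_cancel']
      simp [FVL]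

/-! zip helpers -/

theorem map_eq_of_zip {α β : Type} {ts us : List α} {F G : α → β}
    (hl : ts.length = us.length) (h : ∀ p ∈ ts.zip us, F p.1 = G p.2) :
    ts.map F = us.map G := by
  induction ts generalizing us with
  | nil => cases us with
      | nil => rfl
      | cons u us => simp at hl
  | cons t ts ih =>
      cases us with
      | nil => simp at hl
      | cons u us =>
          have h1 := h (t, u) (by simp)
          have h2 := ih (by simpa using hl) (fun p hp => h p (by simp [hp]))
          simp only [List.map_cons]
          rw [h1, h2]

theorem zip_of_map_eq {α β : Type} {ts us : List α} {F G : α → β} (h : ts.map F = us.map G) :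
    ts.length = us.length ∧ ∀ p ∈ ts.zip us, F p.1 = G p.2 := by
  induction ts generalizing us with
  | nil => cases us with
      | nil => simp
      | cons u us => simp at h
  | cons t ts ih =>
      cases us with
      | nil => simp at h
      | cons u us =>
          simp only [List.map_cons, List.cons.injEq] at h
          obtain ⟨h1, h2⟩ := h
          obtain ⟨hl, hz⟩ := ih h2
          refine ⟨by simp [hl], ?_⟩
          intro p hp
          simp only [List.zip_cons_cons, List.mem_cons] at hp
          rcases hp with rfl | hp
          · exact h1
          · exact hz p hp

/-! spine shapes of translated terms -/

theorem sp_atom (as : List Atom) (Δ : Finset (Atom × Var)) (a : Atom) :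
    spineD (db [] (trT as Δ (.atom a))) = (DB.fvar (.inl a), []) := by
  rw [trT_atom]; rfl

theorem sp_app (as : List Atom) (Δ : Finset (Atom × Var)) (f : ℕ) (ts : List NTerm) :
    spineD (db [] (trT as Δ (.app f ts)))
      = (DB.const f, ts.map (fun t => db [] (trT as Δ t))) := by
  rw [trT_app, db_appList, spineD_foldl _ _ (fun x y h => by cases h), List.map_map]
  rfl

theorem sp_abs (as : List Atom) (Δ : Finset (Atom × Var)) (a : Atom) (t : NTerm) :
    spineD (db [] (trT as Δ (.abs a t))) = (DB.lam (db [.inl a] (trT as Δ t)), []) := by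
  rw [trT_abs]; rfl

theorem sp_susp (as : List Atom) (Δ : Finset (Atom × Var)) (π : Perm0) (X : Var) :
    spineD (db [] (trT as Δ (.susp π X))) =
      (DB.fvar (.inr X), (capList as Δ X).map (fun b => DB.fvar (.inl (permAtom π b)))) := by
  rw [trT_susp, db_appList, spineD_foldl _ _ (fun x y h => by cases h), List.map_map]
  rfl

theorem map_eq_map_pointwise {α β : Type} {l : List α} {F G : α → β}
    (h : l.map F = l.map G) : ∀ x ∈ l, F x = G x := by
  induction l with
  | nil => simp
  | cons a l ih =>
      simp only [List.map_cons, List.cons.injEq] at h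
      intro x hx
      rcases List.mem_cons.mp hx with rfl | hx
      · exact h.1
      · exact ih h.2 x hx

/-- `Δ ⊢ t ≈ u` is derivable iff the translated λ-terms
`⟦t⟧_Δ` and `⟦u⟧_Δ` are α-equivalent. -/
theorem statement14 (as : List Atom) (hnd : as.Nodup)
    (Δ : Finset (Atom × Var)) (t u : NTerm)
    (ht : natoms t ⊆ as.toFinset) (hu : natoms u ⊆ as.toFinset) :
    Alpha Δ t u ↔ AEq (trT as Δ t) (trT as Δ u) := by
  suffices H : ∀ n t u, sizeN t ≤ n → natoms t ⊆ as.toFinset → natoms u ⊆ as.toFinset →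
      (Alpha Δ t u ↔ AEq (trT as Δ t) (trT as Δ u)) from H (sizeN t) t u le_rfl ht hu
  clear ht hu t u
  intro n
  induction n with
  | zero => intro t u hs _ _; have := sizeN_pos t; omega
  | succ n IH =>
    intro t u hs ht hu
    constructor
    · intro hA
      rw [AEq_iff_db]
      cases hA with
      | atom a => rfl
      | @susp π π' X hΔ =>
          rw [trT_susp, trT_susp]
          have : (capList as Δ X).map (fun b => LTerm.var (.inl (permAtom π b)))
              = (capList as Δ X).map (fun b => LTerm.var (.inl (permAtom π' b))) := by
            apply List.map_congr_left
            intro b hb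
            have hbΔ : (b, X) ∉ Δ := (mem_capList.mp hb).2
            have hbe : permAtom π b = permAtom π' b := by
              by_contra hc; exact hbΔ (hΔ b hc)
            rw [hbe]
          rw [this]
      | @app f ts us hl hz =>
          rw [trT_app, trT_app, db_appList, db_appList, List.map_map, List.map_map]
          have hlist : ts.map (db [] ∘ trT as Δ) = us.map (db [] ∘ trT as Δ) := by
            apply map_eq_of_zip hl
            intro p hp
            have hmem := List.of_mem_zip hp
            have hsz : sizeN p.1 ≤ n := by
              have := sizeN_lt_of_mem (f := f) hmem.1; omega
            have hsub1 : natoms p.1 ⊆ as.toFinset :=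
              fun x hx => ht (mem_natoms_app.mpr ⟨p.1, hmem.1, hx⟩)
            have hsub2 : natoms p.2 ⊆ as.toFinset :=
              fun x hx => hu (mem_natoms_app.mpr ⟨p.2, hmem.2, hx⟩)
            exact AEq_iff_db.mp ((IH p.1 p.2 hsz hsub1 hsub2).mp (hz p hp))
          rw [hlist]
      | @abs1 a t0 u0 hA0 =>
          rw [trT_abs, trT_abs]
          show DB.lam (db [.inl a] (trT as Δ t0)) = DB.lam (db [.inl a] (trT as Δ u0))
          have hsz : sizeN t0 ≤ n := by rw [sizeN_abs] at hs; omega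
          have ht0 : natoms t0 ⊆ as.toFinset :=
            fun x hx => ht (by rw [natoms_abs]; exact Finset.mem_insert_of_mem hx)
          have hu0 : natoms u0 ⊆ as.toFinset :=
            fun x hx => hu (by rw [natoms_abs]; exact Finset.mem_insert_of_mem hx)
          rw [db_congr_env (AEq_iff_db.mp ((IH t0 u0 hsz ht0 hu0).mp hA0)) [.inl a]]
      | @abs2 a b t0 u0 hab hA0 hF =>
          rw [trT_abs, trT_abs]
          show DB.lam (db [.inl a] (trT as Δ t0)) = DB.lam (db [.inl b] (trT as Δ u0))
          congr 1
          have hsz : sizeN t0 ≤ n := by rw [sizeN_abs] at hs; omega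
          have ht0 : natoms t0 ⊆ as.toFinset :=
            fun x hx => ht (by rw [natoms_abs]; exact Finset.mem_insert_of_mem hx)
          have hu0 : natoms u0 ⊆ as.toFinset :=
            fun x hx => hu (by rw [natoms_abs]; exact Finset.mem_insert_of_mem hx)
          have ha_as : a ∈ as.toFinset := ht (by rw [natoms_abs]; exact Finset.mem_insert_self _ _)
          have hb_as : b ∈ as.toFinset := hu (by rw [natoms_abs]; exact Finset.mem_insert_self _ _)
          have hswapsub : natoms (swapTerm a b u0) ⊆ as.toFinset := by
            intro x hx
            rcases mem_natoms_permTerm _ hx with ⟨p, hp, hc⟩ | hxx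
            · simp only [List.mem_singleton] at hp
              subst hp
              rcases hc with rfl | rfl
              · exact ha_as
              · exact hb_as
            · exact hu0 hxx
          have hd : db [] (trT as Δ t0) = db [] (trT as Δ (swapTerm a b u0)) :=
            AEq_iff_db.mp ((IH t0 (swapTerm a b u0) hsz ht0 hswapsub).mp hA0)
          rw [trT_swapTerm] at hd
          have hg := varMap_injective (Sum.inl a : LVar) (.inl b)
          have e2 : db [] (swapL (.inl a) (.inl b) (trT as Δ u0))
              = mapFv (varMap (.inl a) (.inl b)) (db [] (trT as Δ u0)) :=
            db_renameAll hg (trT as Δ u0) []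
          rw [e2] at hd
          have eA : db [(.inl a : LVar)] (trT as Δ t0)
              = closeK 0 (.inl a) (db [] (trT as Δ t0)) := db_append _ [] _
          have eB : db [(.inl b : LVar)] (trT as Δ u0)
              = closeK 0 (.inl b) (db [] (trT as Δ u0)) := db_append _ [] _
          rw [eA, eB, hd]
          have hBA : varMap (Sum.inl a : LVar) (.inl b) (.inl b) = .inl a := by simp [varMap]
          calc closeK 0 (Sum.inl a : LVar)
                  (mapFv (varMap (.inl a) (.inl b)) (db [] (trT as Δ u0)))
              = closeK 0 (varMap (Sum.inl a : LVar) (.inl b) (.inl b))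
                  (mapFv (varMap (.inl a) (.inl b)) (db [] (trT as Δ u0))) := by rw [hBA]
            _ = mapFv (varMap (.inl a) (.inl b))
                  (closeK 0 (.inl b) (db [] (trT as Δ u0))) := closeK_mapFv hg 0 _ _
            _ = closeK 0 (.inl b) (db [] (trT as Δ u0)) := mapFv_id_of ?_
          intro v hv
          rw [fvD_closeK, fvD_db] at hv
          have hvB : v ≠ .inl b := (Finset.mem_erase.mp hv).1
          have hvU : v ∈ FVL (trT as Δ u0) := by
            have := (Finset.mem_erase.mp hv).2
            simpa using this
          have hvA : v ≠ .inl a := fun hc => (fresh_not_fvl as hF) (hc ▸ hvU)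
          simp [varMap, hvA, hvB]
    · intro hE
      have hd := AEq_iff_db.mp hE
      have hsp := congrArg spineD hd
      cases t with
      | atom a =>
          cases u with
          | atom a' =>
              rw [sp_atom, sp_atom] at hsp
              simp only [Prod.mk.injEq, DB.fvar.injEq, Sum.inl.injEq, and_true] at hsp
              subst hsp
              exact Alpha.atom a
          | app f us => rw [sp_atom, sp_app] at hsp; simp at hsp
          | abs b u0 => rw [sp_atom, sp_abs] at hsp; simp at hsp
          | susp π X => rw [sp_atom, sp_susp] at hsp; simp at hsp
      | app f ts =>
          cases u with
          | atom a' => rw [sp_app, sp_atom] at hsp; simp at hsp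
          | abs b u0 => rw [sp_app, sp_abs] at hsp; simp at hsp
          | susp π X => rw [sp_app, sp_susp] at hsp; simp at hsp
          | app f' us =>
              rw [sp_app, sp_app] at hsp
              simp only [Prod.mk.injEq, DB.const.injEq] at hsp
              obtain ⟨rfl, hargs⟩ := hsp
              obtain ⟨hl, hz⟩ := zip_of_map_eq hargs
              refine Alpha.app hl ?_
              intro p hp
              have hmem := List.of_mem_zip hp
              have hsz : sizeN p.1 ≤ n := by
                have := sizeN_lt_of_mem (f := f) hmem.1; omega
              have hsub1 : natoms p.1 ⊆ as.toFinset :=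
                fun x hx => ht (mem_natoms_app.mpr ⟨p.1, hmem.1, hx⟩)
              have hsub2 : natoms p.2 ⊆ as.toFinset :=
                fun x hx => hu (mem_natoms_app.mpr ⟨p.2, hmem.2, hx⟩)
              exact (IH p.1 p.2 hsz hsub1 hsub2).mpr (AEq_iff_db.mpr (hz p hp))
      | abs a t0 =>
          cases u with
          | atom a' => rw [sp_abs, sp_atom] at hsp; simp at hsp
          | app f' us => rw [sp_abs, sp_app] at hsp; simp at hsp
          | susp π X => rw [sp_abs, sp_susp] at hsp; simp at hsp
          | abs b u0 =>
              rw [sp_abs, sp_abs] at hsp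
              simp only [Prod.mk.injEq, DB.lam.injEq, and_true] at hsp
              have hsz : sizeN t0 ≤ n := by rw [sizeN_abs] at hs; omega
              have ht0 : natoms t0 ⊆ as.toFinset :=
                fun x hx => ht (by rw [natoms_abs]; exact Finset.mem_insert_of_mem hx)
              have hu0 : natoms u0 ⊆ as.toFinset :=
                fun x hx => hu (by rw [natoms_abs]; exact Finset.mem_insert_of_mem hx)
              have ha_as : a ∈ as.toFinset :=
                ht (by rw [natoms_abs]; exact Finset.mem_insert_self _ _)
              have hb_as : b ∈ as.toFinset :=
                hu (by rw [natoms_abs]; exact Finset.mem_insert_self _ _)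
              have lcT : lcD 0 (db [] (trT as Δ t0)) := lcD_db [] _
              have lcU : lcD 0 (db [] (trT as Δ u0)) := lcD_db [] _
              have eA : db [(.inl a : LVar)] (trT as Δ t0)
                  = closeK 0 (.inl a) (db [] (trT as Δ t0)) := db_append _ [] _
              have eB : db [(.inl b : LVar)] (trT as Δ u0)
                  = closeK 0 (.inl b) (db [] (trT as Δ u0)) := db_append _ [] _
              rw [eA, eB] at hsp
              by_cases hab : a = b
              · subst hab
                refine Alpha.abs1 ?_
                have hopen := congrArg (openK 0 (Sum.inl a : LVar)) hsp
                rw [open_closeK lcT, open_closeK lcU] at hopen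
                exact (IH t0 u0 hsz ht0 hu0).mpr (AEq_iff_db.mpr hopen)
              · have hAB : (Sum.inl a : LVar) ≠ .inl b := by simp [hab]
                have hopen := congrArg (openK 0 (Sum.inl a : LVar)) hsp
                rw [open_closeK lcT, openK_closeK_ne lcU] at hopen
                -- freshness
                have hfv : (Sum.inl a : LVar) ∉ FVL (trT as Δ u0) := by
                  intro hmem
                  have h1 : (Sum.inl a : LVar)
                      ∈ fvD (closeK 0 (Sum.inl b : LVar) (db [] (trT as Δ u0))) := by
                    rw [fvD_closeK, fvD_db]
                    refine Finset.mem_erase.mpr ⟨hAB, ?_⟩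
                    simpa using hmem
                  rw [← hsp, fvD_closeK, fvD_db] at h1
                  exact (Finset.mem_erase.mp h1).1 rfl
                have hFr : Fresh Δ a u0 :=
                  not_fvl_fresh as Δ u0 a (List.mem_toFinset.mp ha_as) hu0 hfv
                have hmap : mapFv (fun v => if v = (Sum.inl b : LVar) then (Sum.inl a : LVar)
                      else v) (db [] (trT as Δ u0))
                    = mapFv (varMap (.inl a) (.inl b)) (db [] (trT as Δ u0)) := by
                  apply mapFv_congr
                  intro v hv
                  rw [fvD_db] at hv
                  have hvU : v ∈ FVL (trT as Δ u0) := by simpa using hv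
                  have hvA : v ≠ .inl a := fun hc => hfv (hc ▸ hvU)
                  by_cases hvB : v = .inl b <;> simp [varMap, hvA, hvB, Ne.symm hab]
                have hfinal : db [] (trT as Δ t0) = db [] (trT as Δ (swapTerm a b u0)) := by
                  calc db [] (trT as Δ t0)
                      = mapFv (varMap (.inl a) (.inl b)) (db [] (trT as Δ u0)) := by
                        rw [hopen, hmap]
                    _ = db [] (renameAll (varMap (.inl a) (.inl b)) (trT as Δ u0)) :=
                        (db_renameAll (varMap_injective _ _) (trT as Δ u0) []).symm
                    _ = db [] (trT as Δ (swapTerm a b u0)) := by rw [trT_swapTerm]; rfl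
                have hswapsub : natoms (swapTerm a b u0) ⊆ as.toFinset := by
                  intro x hx
                  rcases mem_natoms_permTerm _ hx with ⟨p, hp, hc⟩ | hxx
                  · simp only [List.mem_singleton] at hp
                    subst hp
                    rcases hc with rfl | rfl
                    · exact ha_as
                    · exact hb_as
                  · exact hu0 hxx
                exact Alpha.abs2 hab
                  ((IH t0 (swapTerm a b u0) hsz ht0 hswapsub).mpr (AEq_iff_db.mpr hfinal)) hFr
      | susp π X =>
          cases u with
          | atom a' => rw [sp_susp, sp_atom] at hsp; simp at hsp
          | app f' us => rw [sp_susp, sp_app] at hsp; simp at hsp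
          | abs b u0 => rw [sp_susp, sp_abs] at hsp; simp at hsp
          | susp π' X' =>
              rw [sp_susp, sp_susp] at hsp
              simp only [Prod.mk.injEq, DB.fvar.injEq, Sum.inr.injEq] at hsp
              obtain ⟨rfl, hargs⟩ := hsp
              refine Alpha.susp ?_
              intro c hne
              by_contra hcΔ
              have hπas : ∀ p ∈ π, p.1 ∈ as ∧ p.2 ∈ as := by
                intro p hp
                constructor
                · exact List.mem_toFinset.mp (ht (mem_natoms_susp.mpr ⟨p, hp, Or.inl rfl⟩))
                · exact List.mem_toFinset.mp (ht (mem_natoms_susp.mpr ⟨p, hp, Or.inr rfl⟩))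
              have hπ'as : ∀ p ∈ π', p.1 ∈ as ∧ p.2 ∈ as := by
                intro p hp
                constructor
                · exact List.mem_toFinset.mp (hu (mem_natoms_susp.mpr ⟨p, hp, Or.inl rfl⟩))
                · exact List.mem_toFinset.mp (hu (mem_natoms_susp.mpr ⟨p, hp, Or.inr rfl⟩))
              by_cases hcas : c ∈ as
              · have hc_cap : c ∈ capList as Δ X := mem_capList.mpr ⟨hcas, hcΔ⟩
                have hpt := map_eq_map_pointwise hargs c hc_cap
                simp only [DB.fvar.injEq, Sum.inl.injEq] at hpt
                exact hne hpt
              · have h1 : permAtom π c = c :=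
                  permAtom_fix (fun p hp => ⟨fun hc => hcas (hc ▸ (hπas p hp).1),
                    fun hc => hcas (hc ▸ (hπas p hp).2)⟩)
                have h2 : permAtom π' c = c :=
                  permAtom_fix (fun p hp => ⟨fun hc => hcas (hc ▸ (hπ'as p hp).1),
                    fun hc => hcas (hc ▸ (hπ'as p hp).2)⟩)
                rw [h1, h2] at hne
                exact hne rfl
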